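/- Let H be a real Hilbert space, let B1, B2 : H × H → ℝ be continuous bilinear forms, let k_min > 0 be such that B_i(v,v) ≥ k_min ‖v‖² for all v ∈ H and i = 1,2, and let δ ≥ 0 be such that |B1(v,w) − B2(v,w)| ≤ δ ‖v‖ ‖w‖ for all v, w ∈ H. Let L : H → ℝ be a continuous linear functional, and suppose p1, p2 ∈ H satisfy B1(p1, q) = L(q) and B2(p2, q) = L(q) for all q ∈ H. Then ‖p1 − p2‖ ≤ (‖L‖ / k_min²) · δ. -/

import Mathlib

/-- Abstract continuity of the forward map: if `B1, B2` are bounded bilinear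
forms on a Hilbert space `H`, coercive with common constant `k_min > 0`, whose
difference is bounded by `δ`, and `p1, p2` solve the variational problems
`B_i(p_i, q) = L(q)` for a bounded linear functional `L`, then
`‖p1 − p2‖ ≤ (‖L‖/k_min²)·δ`. -/
theorem statement4 {H : Type*} [NormedAddCommGroup H] [InnerProductSpace ℝ H]
    [CompleteSpace H] (B1 B2 : H →L[ℝ] H →L[ℝ] ℝ)
    (kmin : ℝ) (hk : 0 < kmin)
    (hc1 : ∀ v, kmin * ‖v‖ ^ 2 ≤ B1 v v) (hc2 : ∀ v, kmin * ‖v‖ ^ 2 ≤ B2 v v)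
    (δ : ℝ) (hδ : 0 ≤ δ) (hdiff : ∀ v w, |B1 v w - B2 v w| ≤ δ * ‖v‖ * ‖w‖)
    (L : H →L[ℝ] ℝ) (p1 p2 : H)
    (h1 : ∀ q, B1 p1 q = L q) (h2 : ∀ q, B2 p2 q = L q) :
    ‖p1 - p2‖ ≤ ‖L‖ / kmin ^ 2 * δ := by
  set e := p1 - p2 with he
  -- bound on ‖p2‖
  have hp2 : kmin * ‖p2‖ ^ 2 ≤ ‖L‖ * ‖p2‖ := by
    calc kmin * ‖p2‖ ^ 2 ≤ B2 p2 p2 := hc2 p2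
      _ = L p2 := h2 p2
      _ ≤ ‖L‖ * ‖p2‖ := (le_abs_self _).trans (L.le_opNorm p2)
  have hp2' : ‖p2‖ ≤ ‖L‖ / kmin := by
    rcases eq_or_lt_of_le (norm_nonneg p2) with h0 | h0
    · rw [← h0]
      positivity
    · rw [le_div_iff₀ hk]
      have := (mul_le_mul_iff_of_pos_right h0).mp (by nlinarith [hp2] : kmin * ‖p2‖ * ‖p2‖ ≤ ‖L‖ * ‖p2‖)
      linarith [this]
  -- key estimate
  have key : kmin * ‖e‖ ^ 2 ≤ δ * ‖p2‖ * ‖e‖ := by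
    have hB : B1 e e = B2 p2 e - B1 p2 e := by
      have : B1 p1 e = B2 p2 e := by rw [h1 e, h2 e]
      have hsub : B1 e e = B1 p1 e - B1 p2 e := by
        simp [he, map_sub]; ring
      rw [hsub, this]
    calc kmin * ‖e‖ ^ 2 ≤ B1 e e := hc1 e
      _ = -(B1 p2 e - B2 p2 e) := by rw [hB]; ring
      _ ≤ |B1 p2 e - B2 p2 e| := neg_le_abs _
      _ ≤ δ * ‖p2‖ * ‖e‖ := hdiff p2 e
  have hne : kmin * ‖e‖ ≤ δ * ‖p2‖ := by
    rcases eq_or_lt_of_le (norm_nonneg e) with h0 | h0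
    · rw [← h0]; simp; positivity
    · nlinarith [key]
  calc ‖e‖ ≤ δ * ‖p2‖ / kmin := by rw [le_div_iff₀ hk]; linarith [hne]
    _ ≤ δ * (‖L‖ / kmin) / kmin := by
        gcongr
    _ = ‖L‖ / kmin ^ 2 * δ := by field_simp
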